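/- arXiv:1312.5620 — 2 statements merged into one kernel-verified Lean document; each statement's English description precedes it below -/
import Mathlib

section
/- Let G be obtained from a 5-cycle by attaching pendant edges so that exactly two cycle vertices, at distance 2 on the cycle, have pendant edges. Then the strong chromatic index of G equals max over those vertices u of d(u) + 2. -/
open SimpleGraph

/-- Two edges of `G` are within distance at most 2: they share a vertex, or some edge of `G`
joins an endpoint of one to an endpoint of the other. -/
def EdgesNear {V : Type*} (G : SimpleGraph V) (e f : Sym2 V) : Prop :=
  (∃ x, x ∈ e ∧ x ∈ f) ∨ (∃ x y, x ∈ e ∧ y ∈ f ∧ G.Adj x y)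

/-- `c` assigns distinct colours to any two distinct edges of `G` at distance at most 2. -/
def IsStrongEdgeColoringOn {V : Type*} (G : SimpleGraph V) (c : Sym2 V → ℕ) : Prop :=
  ∀ e ∈ G.edgeSet, ∀ f ∈ G.edgeSet, e ≠ f → EdgesNear G e f → c e ≠ c f

/-- A strong edge-colouring of `G` with `k` colours. -/
def IsStrongEdgeColoring {V : Type*} (G : SimpleGraph V) (k : ℕ) (c : Sym2 V → ℕ) : Prop :=
  (∀ e ∈ G.edgeSet, c e < k) ∧ IsStrongEdgeColoringOn G c

/-- The strong chromatic index of `G`. -/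
noncomputable def sci {V : Type*} (G : SimpleGraph V) : ℕ :=
  sInf {k | ∃ c : Sym2 V → ℕ, IsStrongEdgeColoring G k c}

/-- Degree of a vertex (cardinality of its neighbour set). -/
noncomputable def sdeg {V : Type*} (G : SimpleGraph V) (v : V) : ℕ :=
  (G.neighborSet v).ncard

/-- The graph obtained from the cycle `C_n` (on vertices `Sum.inl i`, `i : Fin n`)
by attaching `p i` pendant edges at the cycle vertex `i` (the pendant neighbours of `i`
are the vertices `Sum.inr ⟨i, x⟩`). -/
def pufferGraph (n : ℕ) (p : Fin n → ℕ) :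
    SimpleGraph (Fin n ⊕ Σ i : Fin n, Fin (p i)) :=
  SimpleGraph.fromRel (fun a b =>
    (∃ i j : Fin n, a = Sum.inl i ∧ b = Sum.inl j ∧ (SimpleGraph.cycleGraph n).Adj i j) ∨
    (∃ (i : Fin n) (x : Fin (p i)), a = Sum.inl i ∧ b = Sum.inr ⟨i, x⟩))

open Classical in
/-- The maximum of `d(u) + d(v)` over the edges `uv` of the cycle of `pufferGraph n p`. -/
noncomputable def maxCycleDegSum (n : ℕ) (p : Fin n → ℕ) : ℕ :=
  Finset.univ.sup fun q : Fin n × Fin n =>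
    if (SimpleGraph.cycleGraph n).Adj q.1 q.2 then
      sdeg (pufferGraph n p) (Sum.inl q.1) + sdeg (pufferGraph n p) (Sum.inl q.2)
    else 0

variable {p : Fin 5 → ℕ}

lemma cyc5_adj {i j : Fin 5} : (cycleGraph 5).Adj i j ↔ (j = i + 1 ∨ i = j + 1) := by
  show (cycleGraph (3+2)).Adj i j ↔ _
  rw [cycleGraph_adj, sub_eq_iff_eq_add, sub_eq_iff_eq_add, or_comm,
    add_comm (1:Fin 5) j, add_comm (1:Fin 5) i]

lemma padj_inl_inl {i j : Fin 5} :
    (pufferGraph 5 p).Adj (Sum.inl i) (Sum.inl j) ↔ (j = i + 1 ∨ i = j + 1) := by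
  rw [pufferGraph, fromRel_adj]
  constructor
  · rintro ⟨hne, (⟨a,b,ha,hb,hab⟩|⟨a,x,ha,hb⟩)|(⟨a,b,ha,hb,hab⟩|⟨a,x,ha,hb⟩)⟩
    · cases ha; cases hb; exact cyc5_adj.mp (by simp_all [Sum.inl.injEq] <;> exact hab)
    · exact absurd hb (by simp)
    · cases ha; cases hb
      rcases cyc5_adj.mp (by simp_all [Sum.inl.injEq] <;> exact hab) with h | h
      · right; simp_all
      · left; simp_all
    · exact absurd hb (by simp)
  · intro hadj
    have hc : (cycleGraph 5).Adj i j := cyc5_adj.mpr hadj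
    exact ⟨by simp [hc.ne], Or.inl (Or.inl ⟨i, j, rfl, rfl, hc⟩)⟩

lemma padj_inl_inr {i j : Fin 5} {x : Fin (p j)} :
    (pufferGraph 5 p).Adj (Sum.inl i) (Sum.inr ⟨j, x⟩) ↔ i = j := by
  rw [pufferGraph, fromRel_adj]
  constructor
  · rintro ⟨hne, (⟨a,b,ha,hb,hab⟩|⟨a,y,ha,hb⟩)|(⟨a,b,ha,hb,hab⟩|⟨a,y,ha,hb⟩)⟩
    · exact absurd hb (by simp)
    · simp only [Sum.inl.injEq, Sum.inr.injEq, Sigma.mk.inj_iff] at ha hb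
      exact ha.trans hb.1.symm
    · exact absurd ha (by simp)
    · exact absurd hb (by simp)
  · rintro rfl
    exact ⟨by simp, Or.inl (Or.inr ⟨i, x, rfl, rfl⟩)⟩

lemma padj_inr_inr {a b : Σ i : Fin 5, Fin (p i)} :
    ¬ (pufferGraph 5 p).Adj (Sum.inr a) (Sum.inr b) := by
  rw [pufferGraph, fromRel_adj]
  rintro ⟨hne, (⟨i,j,hi,hj,_⟩|⟨i,x,hi,_⟩)|(⟨i,j,hi,hj,_⟩|⟨i,x,hi,_⟩)⟩ <;> simp_all


lemma pdeg (w : Fin 5) : sdeg (pufferGraph 5 p) (Sum.inl w) = p w + 2 := by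
  have hset : (pufferGraph 5 p).neighborSet (Sum.inl w) =
      (Set.range fun x : Fin (p w) => (Sum.inr ⟨w, x⟩ : Fin 5 ⊕ Σ i : Fin 5, Fin (p i))) ∪
        {Sum.inl (w+1), Sum.inl (w-1)} := by
    ext b
    cases b with
    | inl j =>
      simp only [mem_neighborSet, padj_inl_inl, Set.mem_union, Set.mem_range,
        Set.mem_insert_iff, Set.mem_singleton_iff, Sum.inl.injEq]
      constructor
      · rintro (rfl | h)
        · exact Or.inr (Or.inl rfl)
        · refine Or.inr (Or.inr ?_); rw [h]; open Fin.CommRing in ring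
      · rintro (⟨x, hx⟩ | rfl | rfl)
        · exact absurd hx (by simp)
        · exact Or.inl rfl
        · right; open Fin.CommRing in ring
    | inr a =>
      obtain ⟨j, x⟩ := a
      simp only [mem_neighborSet, padj_inl_inr, Set.mem_union, Set.mem_range,
        Set.mem_insert_iff, Set.mem_singleton_iff]
      constructor
      · rintro rfl; exact Or.inl ⟨x, rfl⟩
      · rintro (⟨y, hy⟩ | h | h)
        · injection hy with h1
          exact congrArg Sigma.fst h1
        · exact absurd h (by simp)
        · exact absurd h (by simp)
  rw [sdeg, hset, Set.ncard_union_eq]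
  · have h1 : (Set.range fun x : Fin (p w) => (Sum.inr ⟨w, x⟩ : Fin 5 ⊕ Σ i : Fin 5, Fin (p i))).ncard = p w := by
      rw [← Set.image_univ, Set.ncard_image_of_injective _ (fun a b hab => by
        simpa [Sum.inr.injEq, Sigma.mk.inj_iff, Fin.heq_ext_iff] using hab), Set.ncard_univ]
      simp
    rw [h1, Set.ncard_pair (by
      simp only [ne_eq, Sum.inl.injEq]
      exact (by decide : ∀ w : Fin 5, ¬ w + 1 = w - 1) w)]
  · simp [Set.disjoint_left]


lemma edgesNear_symm {V : Type*} {G : SimpleGraph V} {e f : Sym2 V}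
    (h : EdgesNear G e f) : EdgesNear G f e := by
  rcases h with ⟨x, h1, h2⟩ | ⟨x, y, h1, h2, h3⟩
  · exact Or.inl ⟨x, h2, h1⟩
  · exact Or.inr ⟨y, x, h2, h1, h3.symm⟩

lemma edge_cases {u : Fin 5} (h : ∀ i, i ≠ u → i ≠ u + 2 → p i = 0)
    {e : Sym2 (Fin 5 ⊕ Σ i : Fin 5, Fin (p i))}
    (he : e ∈ (pufferGraph 5 p).edgeSet) :
    (∃ i : Fin 5, e = s(Sum.inl i, Sum.inl (i+1))) ∨
    (∃ (w : Fin 5) (x : Fin (p w)), (w = u ∨ w = u + 2) ∧ e = s(Sum.inl w, Sum.inr ⟨w, x⟩)) := by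
  have key : ∀ (w : Fin 5), Fin (p w) → w = u ∨ w = u + 2 := by
    intro w x
    by_contra hc
    push_neg at hc
    have := h w hc.1 hc.2
    exact absurd x.2 (by omega)
  induction e with
  | _ a b =>
    rw [mem_edgeSet] at he
    match a, b with
    | Sum.inl i, Sum.inl j =>
      rcases padj_inl_inl.mp he with rfl | rfl
      · exact Or.inl ⟨i, rfl⟩
      · exact Or.inl ⟨j, Sym2.eq_swap⟩
    | Sum.inl i, Sum.inr ⟨j, x⟩ =>
      obtain rfl : i = j := padj_inl_inr.mp he
      exact Or.inr ⟨i, x, key i x, rfl⟩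
    | Sum.inr ⟨j, x⟩, Sum.inl i =>
      obtain rfl : i = j := padj_inl_inr.mp he.symm
      exact Or.inr ⟨i, x, key i x, Sym2.eq_swap⟩
    | Sum.inr a, Sum.inr b => exact absurd he padj_inr_inr

def pendCol (u j : Fin 5) (x : ℕ) : ℕ :=
  if j = u then (if x = 0 then 2 else 4 + x) else (if x = 0 then 4 else 4 + x)

def vcol (p : Fin 5 → ℕ) (u : Fin 5) :
    (Fin 5 ⊕ Σ i : Fin 5, Fin (p i)) → (Fin 5 ⊕ Σ i : Fin 5, Fin (p i)) → ℕ
  | Sum.inl i, Sum.inl j =>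
      if j = i + 1 then (i - u).val else if i = j + 1 then (j - u).val else 0
  | Sum.inl _, Sum.inr a => pendCol u a.1 a.2.val
  | Sum.inr a, Sum.inl _ => pendCol u a.1 a.2.val
  | Sum.inr _, Sum.inr _ => 0

lemma vcol_symm (p : Fin 5 → ℕ) (u : Fin 5) : ∀ a b, vcol p u a b = vcol p u b a := by
  rintro (i | a) (j | b) <;> simp only [vcol]
  have h2 : ¬ (j = i + 1 ∧ i = j + 1) := by
    rintro ⟨rfl, hh⟩
    simp [Fin.ext_iff, Fin.add_def] at hh; omega
  split_ifs with ha hb hb <;> first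
    | rfl
    | (exact absurd ⟨ha, hb⟩ h2)
    | (exact absurd ⟨hb, ha⟩ h2)

noncomputable def ecol (p : Fin 5 → ℕ) (u : Fin 5) :
    Sym2 (Fin 5 ⊕ Σ i : Fin 5, Fin (p i)) → ℕ :=
  Sym2.lift ⟨vcol p u, vcol_symm p u⟩

variable {u : Fin 5}

lemma ecol_cyc (i : Fin 5) : ecol p u s(Sum.inl i, Sum.inl (i+1)) = (i - u).val := by
  simp [ecol, vcol]

lemma ecol_pend (w : Fin 5) (x : Fin (p w)) :
    ecol p u s(Sum.inl w, Sum.inr ⟨w, x⟩) = pendCol u w x.val := by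
  simp [ecol, vcol]

lemma notNear1 (x : Fin (p u)) :
    ¬ EdgesNear (pufferGraph 5 p) s(Sum.inl (u+2), Sum.inl (u+2+1)) s(Sum.inl u, Sum.inr ⟨u, x⟩) := by
  rintro (⟨z, hz1, hz2⟩ | ⟨z, y, hz, hy, hadj⟩)
  · rw [Sym2.mem_iff] at hz1 hz2
    rcases hz1 with rfl | rfl <;> rcases hz2 with h | h <;>
      simp only [Sum.inl.injEq, Fin.ext_iff, Fin.add_def, reduceCtorEq] at h <;> omega
  · rw [Sym2.mem_iff] at hz hy
    rcases hz with rfl | rfl <;> rcases hy with rfl | rfl <;>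
      simp only [padj_inl_inl, padj_inl_inr, Sum.inl.injEq, Fin.ext_iff, Fin.add_def,
        Fin.sub_def] at hadj <;> omega

lemma notNear2 (x : Fin (p (u+2))) :
    ¬ EdgesNear (pufferGraph 5 p) s(Sum.inl (u+4), Sum.inl (u+4+1)) s(Sum.inl (u+2), Sum.inr ⟨u+2, x⟩) := by
  rintro (⟨z, hz1, hz2⟩ | ⟨z, y, hz, hy, hadj⟩)
  · rw [Sym2.mem_iff] at hz1 hz2
    rcases hz1 with rfl | rfl <;> rcases hz2 with h | h <;>
      simp only [Sum.inl.injEq, Fin.ext_iff, Fin.add_def, reduceCtorEq] at h <;> omega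
  · rw [Sym2.mem_iff] at hz hy
    rcases hz with rfl | rfl <;> rcases hy with rfl | rfl <;>
      simp only [padj_inl_inl, padj_inl_inr, Sum.inl.injEq, Fin.ext_iff, Fin.add_def,
        Fin.sub_def] at hadj <;> omega

lemma notNear3 (x : Fin (p u)) (y : Fin (p (u+2))) :
    ¬ EdgesNear (pufferGraph 5 p) s(Sum.inl u, Sum.inr ⟨u, x⟩) s(Sum.inl (u+2), Sum.inr ⟨u+2, y⟩) := by
  rintro (⟨z, hz1, hz2⟩ | ⟨z, y', hz, hy, hadj⟩)
  · rw [Sym2.mem_iff] at hz1 hz2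
    rcases hz1 with rfl | rfl <;> rcases hz2 with h | h <;>
      simp only [Sum.inl.injEq, Sum.inr.injEq, Sigma.mk.inj_iff, Fin.ext_iff, Fin.add_def,
        reduceCtorEq] at h <;> omega
  · rw [Sym2.mem_iff] at hz hy
    rcases hz with rfl | rfl <;> rcases hy with rfl | rfl
    · simp only [padj_inl_inl, Sum.inl.injEq, Fin.ext_iff, Fin.add_def] at hadj; omega
    · simp only [padj_inl_inr, Fin.ext_iff, Fin.add_def] at hadj; omega
    · exact absurd hadj.symm (by rw [padj_inl_inr]; simp [Fin.ext_iff, Fin.add_def]; omega)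
    · exact absurd hadj padj_inr_inr



lemma cyc_pend_ne (i w : Fin 5) (x : Fin (p w)) (hw : w = u ∨ w = u + 2)
    (hnear : EdgesNear (pufferGraph 5 p) s(Sum.inl i, Sum.inl (i+1)) s(Sum.inl w, Sum.inr ⟨w, x⟩)) :
    ecol p u s(Sum.inl i, Sum.inl (i+1)) ≠ ecol p u s(Sum.inl w, Sum.inr ⟨w, x⟩) := by
  rw [ecol_cyc, ecol_pend]
  have hlt := (i - u).isLt
  rcases Nat.eq_zero_or_pos x.val with hx0 | hxpos
  · rcases hw with hw1 | hw1
    all_goals obtain rfl := hw1.symm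
    · rw [pendCol, if_pos rfl, if_pos hx0]
      intro hc
      have hiu : i = u + 2 := by
        simp only [Fin.ext_iff, Fin.sub_def, Fin.add_def] at hc ⊢; omega
      subst hiu
      exact notNear1 x hnear
    · rw [pendCol, if_neg (by simp only [Fin.ext_iff, Fin.add_def]; omega), if_pos hx0]
      intro hc
      have hiu : i = u + 4 := by
        simp only [Fin.ext_iff, Fin.sub_def, Fin.add_def] at hc ⊢; omega
      subst hiu
      exact notNear2 x hnear
  · rw [pendCol]
    split_ifs <;> omega

lemma ecol_strong (hu : 1 ≤ p u) (h : ∀ i, i ≠ u → i ≠ u + 2 → p i = 0) :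
    IsStrongEdgeColoring (pufferGraph 5 p) (max (p u) (p (u+2)) + 4) (ecol p u) := by
  constructor
  · intro e he
    rcases edge_cases h he with ⟨i, rfl⟩ | ⟨w, x, hw, rfl⟩
    · rw [ecol_cyc]; have := (i - u).isLt
      have h5 : 1 ≤ max (p u) (p (u+2)) := le_trans hu (le_max_left _ _)
      omega
    · rw [ecol_pend]
      have hx := x.2
      have hb : p w ≤ max (p u) (p (u+2)) := by
        rcases hw with rfl | rfl
        · exact le_max_left _ _
        · exact le_max_right _ _
      unfold pendCol; split_ifs <;> omega
  · intro e he f hf hne hnear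
    rcases edge_cases h he with ⟨i, rfl⟩ | ⟨w, x, hw, rfl⟩
    · rcases edge_cases h hf with ⟨j, rfl⟩ | ⟨w', x', hw', rfl⟩
      · rw [ecol_cyc, ecol_cyc]
        intro hc
        have : i = j := by
          simp only [Fin.ext_iff, Fin.sub_def] at hc ⊢; omega
        exact hne (by rw [this])
      · exact cyc_pend_ne i w' x' hw' hnear
    · rcases edge_cases h hf with ⟨j, rfl⟩ | ⟨w', x', hw', rfl⟩
      · exact (cyc_pend_ne j w x hw (edgesNear_symm hnear)).symm
      · rcases hw with rfl | rfl <;> rcases hw' with hw' | hw'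
        · -- w = u, w' = u
          subst hw'
          rw [ecol_pend, ecol_pend]
          have hxx : x.val ≠ x'.val := by
            intro hvv
            exact hne (by rw [Fin.ext hvv])
          unfold pendCol; split_ifs <;> omega
        · subst hw'
          exact absurd hnear (notNear3 x x')
        · subst hw'
          exact absurd (edgesNear_symm hnear) (notNear3 x' x)
        · subst hw'
          rw [ecol_pend, ecol_pend]
          have hxx : x.val ≠ x'.val := by
            intro hvv
            exact hne (by rw [Fin.ext hvv])
          unfold pendCol; split_ifs <;> omega

lemma near_of {V : Type*} {G : SimpleGraph V} {e f : Sym2 V} (a b : V) (ha : a ∈ e) (hb : b ∈ f)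
    (hab : a = b ∨ G.Adj a b) : EdgesNear G e f := by
  rcases hab with rfl | hab
  · exact Or.inl ⟨a, ha, hb⟩
  · exact Or.inr ⟨a, b, ha, hb, hab⟩

lemma fv1 : ((1 : Fin 5) : ℕ) = 1 := rfl
lemma fv2 : ((2 : Fin 5) : ℕ) = 2 := rfl
lemma fv4 : ((4 : Fin 5) : ℕ) = 4 := rfl

section LB
variable (p)

noncomputable def pendEdges (w : Fin 5) : Finset (Sym2 (Fin 5 ⊕ Σ i : Fin 5, Fin (p i))) :=
  Finset.univ.image (fun x : Fin (p w) => s(Sum.inl w, Sum.inr ⟨w, x⟩))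

noncomputable def cycEdges (w : Fin 5) : Finset (Sym2 (Fin 5 ⊕ Σ i : Fin 5, Fin (p i))) :=
  {s(Sum.inl w, Sum.inl (w+1)), s(Sum.inl (w-1), Sum.inl w),
   s(Sum.inl (w+1), Sum.inl (w+2)), s(Sum.inl (w-2), Sum.inl (w-1))}

end LB

lemma mem_pendEdges {w : Fin 5} {e} :
    e ∈ pendEdges p w ↔ ∃ x : Fin (p w), e = s(Sum.inl w, Sum.inr ⟨w, x⟩) := by
  simp [pendEdges, eq_comm]

lemma card_pendEdges (w : Fin 5) : (pendEdges p w).card = p w := by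
  rw [pendEdges, Finset.card_image_of_injective _ ?_, Finset.card_univ, Fintype.card_fin]
  intro a b hab
  simp only [Sym2.eq_iff, Sum.inr.injEq, Sigma.mk.inj_iff, heq_eq_eq, reduceCtorEq,
    and_false, false_and, or_false, true_and] at hab
  first
  | exact hab
  | exact hab.2

lemma card_cycEdges (w : Fin 5) : (cycEdges p w).card = 4 := by
  rw [cycEdges]
  rw [Finset.card_insert_of_notMem, Finset.card_insert_of_notMem,
    Finset.card_insert_of_notMem, Finset.card_singleton] <;>
    simp only [Finset.mem_insert, Finset.mem_singleton, Sym2.eq_iff, Sum.inl.injEq,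
      Fin.ext_iff, Fin.add_def, Fin.sub_def, fv1, fv2, fv4] <;>
    try omega

lemma disj_pc (w : Fin 5) : Disjoint (pendEdges p w) (cycEdges p w) := by
  rw [Finset.disjoint_left]
  intro e he hf
  rw [mem_pendEdges] at he
  obtain ⟨x, rfl⟩ := he
  simp only [cycEdges, Finset.mem_insert, Finset.mem_singleton, Sym2.eq_iff, reduceCtorEq,
    and_false, false_and, or_false, false_or, or_self] at hf

lemma lower_bound (w : Fin 5) {k : ℕ} {c : Sym2 (Fin 5 ⊕ Σ i : Fin 5, Fin (p i)) → ℕ}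
    (hc : IsStrongEdgeColoring (pufferGraph 5 p) k c) : p w + 4 ≤ k := by
  classical
  set T := pendEdges p w ∪ cycEdges p w with hT
  have hTmem : ∀ g ∈ T, (∃ x : Fin (p w), g = s(Sum.inl w, Sum.inr ⟨w, x⟩)) ∨
      g = s(Sum.inl w, Sum.inl (w+1)) ∨ g = s(Sum.inl (w-1), Sum.inl w) ∨
      g = s(Sum.inl (w+1), Sum.inl (w+2)) ∨ g = s(Sum.inl (w-2), Sum.inl (w-1)) := by
    intro g hg
    rw [hT, Finset.mem_union, mem_pendEdges] at hg
    rcases hg with hx | hx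
    · exact Or.inl hx
    · right
      simpa only [cycEdges, Finset.mem_insert, Finset.mem_singleton] using hx
  have hsub15 : w = w - 1 + 1 := by open Fin.CommRing in ring
  have hsub25 : w - 1 = w - 2 + 1 := by open Fin.CommRing in ring
  have hedge : ∀ e ∈ T, e ∈ (pufferGraph 5 p).edgeSet := by
    intro e he
    rcases hTmem e he with ⟨x, rfl⟩ | rfl | rfl | rfl | rfl
    · rw [mem_edgeSet, padj_inl_inr]
    · rw [mem_edgeSet, padj_inl_inl]; exact Or.inl rfl
    · rw [mem_edgeSet, padj_inl_inl]; exact Or.inl hsub15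
    · rw [mem_edgeSet, padj_inl_inl]; exact Or.inl (by open Fin.CommRing in ring)
    · rw [mem_edgeSet, padj_inl_inl]; exact Or.inl hsub25
  have hadj1 : (pufferGraph 5 p).Adj (Sum.inl w) (Sum.inl (w+1)) := by
    rw [padj_inl_inl]; exact Or.inl rfl
  have hadj2 : (pufferGraph 5 p).Adj (Sum.inl w) (Sum.inl (w-1)) := by
    rw [padj_inl_inl]; exact Or.inr hsub15
  have hadj3 : (pufferGraph 5 p).Adj (Sum.inl (w+2)) (Sum.inl (w-2)) := by
    rw [padj_inl_inl]
    exact Or.inl ((by decide : ∀ a : Fin 5, a - 2 = a + 2 + 1) w)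
  have hnear : ∀ e ∈ T, ∀ f ∈ T, EdgesNear (pufferGraph 5 p) e f := by
    intro e he f hf
    rcases hTmem e he with ⟨x, rfl⟩ | rfl | rfl | rfl | rfl <;>
      rcases hTmem f hf with ⟨y, rfl⟩ | rfl | rfl | rfl | rfl <;>
      first
      | exact near_of _ _ (Sym2.mem_mk_left _ _) (Sym2.mem_mk_left _ _) (Or.inl rfl)
      | exact near_of _ _ (Sym2.mem_mk_left _ _) (Sym2.mem_mk_left _ _) (Or.inr hadj1)
      | exact near_of _ _ (Sym2.mem_mk_left _ _) (Sym2.mem_mk_left _ _) (Or.inr hadj1.symm)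
      | exact near_of _ _ (Sym2.mem_mk_left _ _) (Sym2.mem_mk_left _ _) (Or.inr hadj2)
      | exact near_of _ _ (Sym2.mem_mk_left _ _) (Sym2.mem_mk_left _ _) (Or.inr hadj2.symm)
      | exact near_of _ _ (Sym2.mem_mk_left _ _) (Sym2.mem_mk_left _ _) (Or.inr hadj3)
      | exact near_of _ _ (Sym2.mem_mk_left _ _) (Sym2.mem_mk_left _ _) (Or.inr hadj3.symm)
      | exact near_of _ _ (Sym2.mem_mk_left _ _) (Sym2.mem_mk_right _ _) (Or.inl rfl)
      | exact near_of _ _ (Sym2.mem_mk_left _ _) (Sym2.mem_mk_right _ _) (Or.inr hadj1)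
      | exact near_of _ _ (Sym2.mem_mk_left _ _) (Sym2.mem_mk_right _ _) (Or.inr hadj1.symm)
      | exact near_of _ _ (Sym2.mem_mk_left _ _) (Sym2.mem_mk_right _ _) (Or.inr hadj2)
      | exact near_of _ _ (Sym2.mem_mk_left _ _) (Sym2.mem_mk_right _ _) (Or.inr hadj2.symm)
      | exact near_of _ _ (Sym2.mem_mk_left _ _) (Sym2.mem_mk_right _ _) (Or.inr hadj3)
      | exact near_of _ _ (Sym2.mem_mk_left _ _) (Sym2.mem_mk_right _ _) (Or.inr hadj3.symm)
      | exact near_of _ _ (Sym2.mem_mk_right _ _) (Sym2.mem_mk_left _ _) (Or.inl rfl)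
      | exact near_of _ _ (Sym2.mem_mk_right _ _) (Sym2.mem_mk_left _ _) (Or.inr hadj1)
      | exact near_of _ _ (Sym2.mem_mk_right _ _) (Sym2.mem_mk_left _ _) (Or.inr hadj1.symm)
      | exact near_of _ _ (Sym2.mem_mk_right _ _) (Sym2.mem_mk_left _ _) (Or.inr hadj2)
      | exact near_of _ _ (Sym2.mem_mk_right _ _) (Sym2.mem_mk_left _ _) (Or.inr hadj2.symm)
      | exact near_of _ _ (Sym2.mem_mk_right _ _) (Sym2.mem_mk_left _ _) (Or.inr hadj3)
      | exact near_of _ _ (Sym2.mem_mk_right _ _) (Sym2.mem_mk_left _ _) (Or.inr hadj3.symm)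
      | exact near_of _ _ (Sym2.mem_mk_right _ _) (Sym2.mem_mk_right _ _) (Or.inl rfl)
      | exact near_of _ _ (Sym2.mem_mk_right _ _) (Sym2.mem_mk_right _ _) (Or.inr hadj1)
      | exact near_of _ _ (Sym2.mem_mk_right _ _) (Sym2.mem_mk_right _ _) (Or.inr hadj1.symm)
      | exact near_of _ _ (Sym2.mem_mk_right _ _) (Sym2.mem_mk_right _ _) (Or.inr hadj2)
      | exact near_of _ _ (Sym2.mem_mk_right _ _) (Sym2.mem_mk_right _ _) (Or.inr hadj2.symm)
      | exact near_of _ _ (Sym2.mem_mk_right _ _) (Sym2.mem_mk_right _ _) (Or.inr hadj3)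
      | exact near_of _ _ (Sym2.mem_mk_right _ _) (Sym2.mem_mk_right _ _) (Or.inr hadj3.symm)
  have hcard : T.card = p w + 4 := by
    rw [hT, Finset.card_union_of_disjoint (disj_pc w), card_pendEdges, card_cycEdges]
  have hinj : Set.InjOn c T := by
    intro e he f hf hcf
    by_contra hne
    exact hc.2 e (hedge e he) f (hedge f hf) hne (hnear e he f hf) hcf
  have hsubr : ∀ e ∈ T, c e ∈ Finset.range k := by
    intro e he
    rw [Finset.mem_range]
    exact hc.1 e (hedge e he)
  have hle := Finset.card_le_card_of_injOn c hsubr hinj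
  rw [hcard, Finset.card_range] at hle
  exact hle

/-- For a 5-cycle with pendant edges attached at exactly two cycle vertices at distance 2
on the cycle, the strong chromatic index equals the maximum over those two vertices `u` of
`d(u) + 2`. -/
theorem sci_C5_two_pendant_vertices (p : Fin 5 → ℕ) (u : Fin 5)
    (hu : 1 ≤ p u) (hv : 1 ≤ p (u + 2)) (h : ∀ i, i ≠ u → i ≠ u + 2 → p i = 0) :
    sci (pufferGraph 5 p) =
      max (sdeg (pufferGraph 5 p) (Sum.inl u)) (sdeg (pufferGraph 5 p) (Sum.inl (u + 2))) + 2 := by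
  rw [pdeg, pdeg]
  have hmem : (max (p u) (p (u+2)) + 4) ∈
      {k | ∃ c, IsStrongEdgeColoring (pufferGraph 5 p) k c} :=
    ⟨ecol p u, ecol_strong hu h⟩
  have hmain : sci (pufferGraph 5 p) = max (p u) (p (u+2)) + 4 := by
    refine le_antisymm (Nat.sInf_le hmem) (le_csInf ⟨_, hmem⟩ ?_)
    rintro k ⟨c, hc⟩
    have h1 := lower_bound u hc
    have h2 := lower_bound (u+2) hc
    omega
  omega
end

section
/- Let G ≠ C_{2k} be obtained from an even cycle C_{2k} with 2k ≥ 6 and 2k ≡ 0 (mod 3) by attaching pendant edges at cycle vertices (at least one pendant edge in total). Then the strong chromatic index of G equals the maximum of d(u) + d(v) − 1 over edges uv of the cycle. -/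
open SimpleGraph

section Aux
variable {n : ℕ} [NeZero n] {p : Fin n → ℕ}

lemma fin_val_one (hn : 6 ≤ n) : (1 : Fin n).val = 1 := by
  rw [Fin.val_one']; exact Nat.mod_eq_of_lt (by omega)

lemma cycle_adj_iff (hn : 6 ≤ n) {u v : Fin n} :
    (cycleGraph n).Adj u v ↔ v = u + 1 ∨ u = v + 1 := by
  have h1 := fin_val_one hn
  rw [cycleGraph_adj']
  constructor
  · rintro (h | h)
    · right
      have : u - v = 1 := Fin.ext (by rw [h1]; exact h)
      rw [sub_eq_iff_eq_add] at this; rw [this, add_comm]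
    · left
      have : v - u = 1 := Fin.ext (by rw [h1]; exact h)
      rw [sub_eq_iff_eq_add] at this; rw [this, add_comm]
  · rintro (h | h)
    · right; subst h; rw [add_sub_cancel_left, h1]
    · left; subst h; rw [add_sub_cancel_left, h1]

lemma cycle_adj_succ (hn : 6 ≤ n) (i : Fin n) : (cycleGraph n).Adj i (i + 1) :=
  (cycle_adj_iff hn).2 (Or.inl rfl)

lemma puffer_adj_inl_inl {i j : Fin n} :
    (pufferGraph n p).Adj (Sum.inl i) (Sum.inl j) ↔ (cycleGraph n).Adj i j := by
  simp only [pufferGraph, fromRel_adj]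
  constructor
  · rintro ⟨hne, (⟨i', j', hi, hj, h⟩ | ⟨_, _, _, h⟩) | (⟨i', j', hi, hj, h⟩ | ⟨_, _, _, h⟩)⟩
    · cases hi; cases hj; exact h
    · exact absurd h (by simp)
    · cases hi; cases hj; exact h.symm
    · exact absurd h (by simp)
  · intro h
    exact ⟨by simpa using h.ne, Or.inl (Or.inl ⟨i, j, rfl, rfl, h⟩)⟩

lemma puffer_adj_inl_inr {i : Fin n} {s : Σ i : Fin n, Fin (p i)} :
    (pufferGraph n p).Adj (Sum.inl i) (Sum.inr s) ↔ s.1 = i := by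
  simp only [pufferGraph, fromRel_adj]
  constructor
  · rintro ⟨hne, (⟨i', j', hi, hj, h⟩ | ⟨i', x, hi, hj⟩) | (⟨i', j', hi, hj, h⟩ | ⟨i', x, hi, hj⟩)⟩
    · exact absurd hj (by simp)
    · cases hi; cases hj; rfl
    · exact absurd hi (by simp)
    · exact absurd hj (by simp)
  · rintro rfl
    exact ⟨by simp, Or.inl (Or.inr ⟨s.1, s.2, rfl, rfl⟩)⟩

lemma puffer_not_adj_inr_inr {s t : Σ i : Fin n, Fin (p i)} :
    ¬ (pufferGraph n p).Adj (Sum.inr s) (Sum.inr t) := by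
  simp only [pufferGraph, fromRel_adj]
  rintro ⟨hne, (⟨i', j', hi, hj, h⟩ | ⟨i', x, hi, hj⟩) | (⟨i', j', hi, hj, h⟩ | ⟨i', x, hi, hj⟩)⟩ <;>
    simp_all

lemma succ_val_mod3 (hn : 6 ≤ n) (h3 : 3 ∣ n) (i : Fin n) :
    (i + 1).val % 3 = (i.val + 1) % 3 := by
  rw [Fin.val_add, Nat.mod_mod_of_dvd _ h3, fin_val_one hn]

lemma succ_val_mod2 (hn : 6 ≤ n) (h2 : 2 ∣ n) (i : Fin n) :
    (i + 1).val % 2 = (i.val + 1) % 2 := by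
  rw [Fin.val_add, Nat.mod_mod_of_dvd _ h2, fin_val_one hn]

lemma mod3_ne (hn : 6 ≤ n) (h3 : 3 ∣ n) {i j : Fin n}
    (h : j = i + 1 ∨ i = j + 1 ∨ j = i + 1 + 1 ∨ i = j + 1 + 1) :
    i.val % 3 ≠ j.val % 3 := by
  rcases h with h | h | h | h <;> subst h
  · have := succ_val_mod3 hn h3 i; omega
  · have := succ_val_mod3 hn h3 j; omega
  · have e1 := succ_val_mod3 hn h3 (i + 1)
    have e2 := succ_val_mod3 hn h3 i; omega
  · have e1 := succ_val_mod3 hn h3 (j + 1)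
    have e2 := succ_val_mod3 hn h3 j; omega

lemma mod2_succ_ne (hn : 6 ≤ n) (h2 : 2 ∣ n) (i : Fin n) : (i + 1).val % 2 ≠ i.val % 2 := by
  rw [succ_val_mod2 hn h2]; omega

lemma fin_one_ne_zero (hn : 6 ≤ n) : (1 : Fin n) ≠ 0 := by
  intro h; have := congrArg Fin.val h
  rw [fin_val_one hn] at this; simp at this

lemma fin_two_ne_zero (hn : 6 ≤ n) : (1 : Fin n) + 1 ≠ 0 := by
  intro h; have := congrArg Fin.val h
  rw [Fin.val_add, fin_val_one hn] at this
  rw [Nat.mod_eq_of_lt (by omega)] at this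
  simp at this

lemma fin_succ_ne (hn : 6 ≤ n) (i : Fin n) : i + 1 ≠ i := by
  intro h
  exact fin_one_ne_zero hn (by rwa [← add_right_cancel_iff (a := i), zero_add, add_comm])

lemma fin_succ_succ_ne (hn : 6 ≤ n) (i : Fin n) : i + 1 + 1 ≠ i := by
  intro h
  rw [add_assoc] at h
  exact fin_two_ne_zero hn (by rwa [← add_right_cancel_iff (a := i), zero_add, add_comm])

lemma puffer_edge (hn : 6 ≤ n) {e : Sym2 (Fin n ⊕ Σ i : Fin n, Fin (p i))}
    (he : e ∈ (pufferGraph n p).edgeSet) :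
    (∃ i : Fin n, e = s(Sum.inl i, Sum.inl (i + 1))) ∨
    (∃ (i : Fin n) (x : Fin (p i)), e = s(Sum.inl i, Sum.inr ⟨i, x⟩)) := by
  induction e using Sym2.ind with
  | _ u v =>
    rw [mem_edgeSet] at he
    match u, v with
    | Sum.inl i, Sum.inl j =>
      rw [puffer_adj_inl_inl, cycle_adj_iff hn] at he
      rcases he with h | h
      · exact Or.inl ⟨i, by rw [h]⟩
      · exact Or.inl ⟨j, by rw [h, Sym2.eq_swap]⟩
    | Sum.inl i, Sum.inr s =>
      rw [puffer_adj_inl_inr] at he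
      obtain ⟨j, x⟩ := s
      cases he
      exact Or.inr ⟨j, x, rfl⟩
    | Sum.inr s, Sum.inl i =>
      rw [adj_comm, puffer_adj_inl_inr] at he
      obtain ⟨j, x⟩ := s
      cases he
      exact Or.inr ⟨j, x, Sym2.eq_swap⟩
    | Sum.inr s, Sum.inr t => exact absurd he puffer_not_adj_inr_inr

lemma near_of_ab (hn : 6 ≤ n) {a b : Fin n} (hab : (cycleGraph n).Adj a b)
    {e f : Sym2 (Fin n ⊕ Σ i : Fin n, Fin (p i))}
    (he : (Sum.inl a : Fin n ⊕ Σ i : Fin n, Fin (p i)) ∈ e ∨ (Sum.inl b : Fin n ⊕ Σ i : Fin n, Fin (p i)) ∈ e)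
    (hf : (Sum.inl a : Fin n ⊕ Σ i : Fin n, Fin (p i)) ∈ f ∨ (Sum.inl b : Fin n ⊕ Σ i : Fin n, Fin (p i)) ∈ f) :
    EdgesNear (pufferGraph n p) e f := by
  have hadj : (pufferGraph n p).Adj (Sum.inl a) (Sum.inl b) := (puffer_adj_inl_inl).2 hab
  rcases he with he | he <;> rcases hf with hf | hf
  · exact Or.inl ⟨_, he, hf⟩
  · exact Or.inr ⟨_, _, he, hf, hadj⟩
  · exact Or.inr ⟨_, _, he, hf, hadj.symm⟩
  · exact Or.inl ⟨_, he, hf⟩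

lemma sdeg_inl (hn : 6 ≤ n) (i : Fin n) :
    sdeg (pufferGraph n p) (Sum.inl i) = 2 + p i := by
  have hset : (pufferGraph n p).neighborSet (Sum.inl i) =
      ({Sum.inl (i + 1), Sum.inl (i - 1)} : Set (Fin n ⊕ Σ i : Fin n, Fin (p i))) ∪
        Set.range (fun x : Fin (p i) => Sum.inr ⟨i, x⟩) := by
    ext v
    match v with
    | Sum.inl j =>
      simp only [mem_neighborSet, puffer_adj_inl_inl, cycle_adj_iff hn, Set.mem_union,
        Set.mem_insert_iff, Set.mem_singleton_iff, Set.mem_range]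
      constructor
      · rintro (h | h)
        · exact Or.inl (Or.inl (by rw [h]))
        · exact Or.inl (Or.inr (by rw [h, add_sub_cancel_right]))
      · rintro ((h | h) | ⟨x, h⟩)
        · exact Or.inl (Sum.inl.inj h)
        · right
          injection h with h2
          rw [h2, sub_add_cancel]
        · exact absurd h (by simp)
    | Sum.inr s =>
      simp only [mem_neighborSet, puffer_adj_inl_inr, Set.mem_union, Set.mem_insert_iff,
        Set.mem_singleton_iff, Set.mem_range]
      constructor
      · intro h
        obtain ⟨j, x⟩ := s
        cases h
        exact Or.inr ⟨x, rfl⟩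
      · rintro ((h | h) | ⟨x, h⟩)
        · exact absurd h (by simp)
        · exact absurd h (by simp)
        · injection h with h2
          rw [← h2]
  rw [sdeg, hset, Set.ncard_union_eq ?_ (Set.toFinite _) (Set.toFinite _)]
  · rw [Set.ncard_pair, ← Set.image_univ, Set.ncard_image_of_injective _ ?_, Set.ncard_univ,
      Nat.card_eq_fintype_card, Fintype.card_fin]
    · intro x y hxy
      simpa using hxy
    · intro h
      injection h with h2
      rw [eq_sub_iff_add_eq] at h2
      exact fin_succ_succ_ne hn i h2
  · rw [Set.disjoint_left]
    rintro v (h | h) <;> subst h <;> simp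

lemma fin_val_two (hn : 6 ≤ n) : ((1 : Fin n) + 1).val = 2 := by
  rw [Fin.val_add, fin_val_one hn, Nat.mod_eq_of_lt (by omega)]

lemma fin_val_three (hn : 6 ≤ n) : ((1 : Fin n) + 1 + 1).val = 3 := by
  rw [Fin.val_add, fin_val_two hn, fin_val_one hn, Nat.mod_eq_of_lt (by omega)]

lemma fin_succ3_ne (hn : 6 ≤ n) (i : Fin n) : i + 1 + 1 + 1 ≠ i := by
  intro h
  rw [add_assoc, add_assoc, ← add_assoc (1 : Fin n)] at h
  have h0 : (1 : Fin n) + 1 + 1 = 0 := by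
    rwa [← add_right_cancel_iff (a := i), zero_add, add_comm]
  have := congrArg Fin.val h0
  rw [fin_val_three hn] at this
  simp at this

end Aux

open Sum in
def pcolf (n : ℕ) [NeZero n] (p : Fin n → ℕ) (m : ℕ) :
    (Fin n ⊕ Σ i : Fin n, Fin (p i)) → (Fin n ⊕ Σ i : Fin n, Fin (p i)) → ℕ
  | inl i, inl j => if j = i + 1 then i.val % 3 else if i = j + 1 then j.val % 3 else 0
  | inl _, inr s => 3 + (if s.1.val % 2 = 0 then s.2.val else m - 1 - s.2.val)
  | inr s, inl _ => 3 + (if s.1.val % 2 = 0 then s.2.val else m - 1 - s.2.val)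
  | inr _, inr _ => 0

section Aux2
variable {n : ℕ} [NeZero n] {p : Fin n → ℕ} {m : ℕ}

lemma pcolf_symm (hn : 6 ≤ n) (m : ℕ) (a b : Fin n ⊕ Σ i : Fin n, Fin (p i)) :
    pcolf n p m a b = pcolf n p m b a := by
  match a, b with
  | Sum.inl i, Sum.inl j =>
    simp only [pcolf]
    by_cases h1 : j = i + 1 <;> by_cases h2 : i = j + 1
    · exact absurd (h2.trans (by rw [h1])) (fun h => fin_succ_succ_ne hn i h.symm)
    · rw [if_pos h1, if_neg h2, if_pos h1]
    · rw [if_neg h1, if_pos h2, if_pos h2]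
    · rw [if_neg h1, if_neg h2, if_neg h2, if_neg h1]
  | Sum.inl i, Sum.inr s => rfl
  | Sum.inr s, Sum.inl i => rfl
  | Sum.inr s, Sum.inr t => rfl

/-- the strong edge colouring as a map on `Sym2`. -/
noncomputable def pcol (n : ℕ) [NeZero n] (p : Fin n → ℕ) (m : ℕ) (hn : 6 ≤ n) :
    Sym2 (Fin n ⊕ Σ i : Fin n, Fin (p i)) → ℕ :=
  Sym2.lift ⟨fun a b => pcolf n p m a b, fun a b => pcolf_symm hn m a b⟩

lemma pcol_cycle (hn : 6 ≤ n) (i : Fin n) :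
    pcol n p m hn s(Sum.inl i, Sum.inl (i + 1)) = i.val % 3 := by
  simp [pcol, pcolf]

lemma pcol_pend (hn : 6 ≤ n) (i : Fin n) (x : Fin (p i)) :
    pcol n p m hn s(Sum.inl i, Sum.inr ⟨i, x⟩) =
      3 + (if i.val % 2 = 0 then x.val else m - 1 - x.val) := by
  simp [pcol, pcolf]

end Aux2

section Aux3
variable {n : ℕ} [NeZero n] {p : Fin n → ℕ} {m : ℕ}
open Sum

lemma cyc_cyc_rel (hn : 6 ≤ n) {i j : Fin n} (hij : i ≠ j)
    (hnear : EdgesNear (pufferGraph n p) s(inl i, inl (i + 1)) s(inl j, inl (j + 1))) :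
    j = i + 1 ∨ i = j + 1 ∨ j = i + 1 + 1 ∨ i = j + 1 + 1 := by
  rcases hnear with ⟨x, hxe, hxf⟩ | ⟨x, y, hxe, hyf, hadj⟩
  · rw [Sym2.mem_iff] at hxe hxf
    rcases hxe with rfl | rfl <;> rcases hxf with h | h
    · exact absurd (Sum.inl.inj h) hij
    · exact Or.inr (Or.inl (Sum.inl.inj h))
    · exact Or.inl (Sum.inl.inj h).symm
    · exact absurd (add_right_cancel (Sum.inl.inj h)) hij
  · rw [Sym2.mem_iff] at hxe hyf
    rcases hxe with rfl | rfl <;> rcases hyf with rfl | rfl <;>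
      rw [puffer_adj_inl_inl, cycle_adj_iff hn] at hadj <;> rcases hadj with h | h
    · exact Or.inl h
    · exact Or.inr (Or.inl h)
    · exact absurd (add_right_cancel h.symm) hij
    · exact Or.inr (Or.inr (Or.inr h))
    · exact Or.inr (Or.inr (Or.inl h))
    · exact absurd (add_right_cancel h) hij
    · exact Or.inl (add_right_cancel h)
    · exact Or.inr (Or.inl (add_right_cancel h))

lemma pend_pend_rel (hn : 6 ≤ n) {i j : Fin n} {x : Fin (p i)} {y : Fin (p j)}
    (hnear : EdgesNear (pufferGraph n p) s(inl i, Sum.inr ⟨i, x⟩) s(inl j, Sum.inr ⟨j, y⟩)) :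
    i = j ∨ j = i + 1 ∨ i = j + 1 := by
  rcases hnear with ⟨z, hze, hzf⟩ | ⟨z, w, hze, hwf, hadj⟩
  · rw [Sym2.mem_iff] at hze hzf
    rcases hze with rfl | rfl <;> rcases hzf with h | h
    · exact Or.inl (Sum.inl.inj h)
    · exact absurd h (by simp)
    · exact absurd h (by simp)
    · injection h with h2
      exact Or.inl (congrArg Sigma.fst h2)
  · rw [Sym2.mem_iff] at hze hwf
    rcases hze with rfl | rfl <;> rcases hwf with rfl | rfl
    · rw [puffer_adj_inl_inl, cycle_adj_iff hn] at hadj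
      exact Or.inr hadj
    · rw [puffer_adj_inl_inr] at hadj
      exact Or.inl hadj.symm
    · rw [adj_comm, puffer_adj_inl_inr] at hadj
      exact Or.inl hadj
    · exact absurd hadj puffer_not_adj_inr_inr

lemma pend_colour_ne_succ (hn : 6 ≤ n) (h2 : 2 ∣ n)
    (hmax : ∀ i : Fin n, p i + p (i + 1) ≤ m)
    {i : Fin n} {x : Fin (p i)} {y : Fin (p (i + 1))} :
    pcol n p m hn s(inl i, Sum.inr ⟨i, x⟩) ≠ pcol n p m hn s(inl (i + 1), Sum.inr ⟨i + 1, y⟩) := by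
  rw [pcol_pend, pcol_pend]
  have hpar := mod2_succ_ne hn h2 i
  have hx := x.isLt
  have hy := y.isLt
  have hs := hmax i
  by_cases hp : i.val % 2 = 0
  · rw [if_pos hp, if_neg (by omega)]
    omega
  · rw [if_neg hp, if_pos (by omega)]
    omega

/-- The strong edge colouring property. -/
lemma pcol_strong (hn : 6 ≤ n) (h2 : 2 ∣ n) (h3 : 3 ∣ n) (hm : 1 ≤ m)
    (hmax : ∀ i : Fin n, p i + p (i + 1) ≤ m) :
    IsStrongEdgeColoring (pufferGraph n p) (m + 3) (pcol n p m hn) := by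
  have hlt : ∀ (i : Fin n) (x : Fin (p i)), x.val < m := fun i x =>
    lt_of_lt_of_le x.isLt (le_trans (Nat.le_add_right _ _) (hmax i))
  constructor
  · intro e he
    rcases puffer_edge hn he with ⟨i, rfl⟩ | ⟨i, x, rfl⟩
    · rw [pcol_cycle]; omega
    · rw [pcol_pend]
      have := hlt i x
      by_cases hp : i.val % 2 = 0
      · rw [if_pos hp]; omega
      · rw [if_neg hp]; omega
  · intro e he f hf hne hnear
    rcases puffer_edge hn he with ⟨i, rfl⟩ | ⟨i, x, rfl⟩ <;>
      rcases puffer_edge hn hf with ⟨j, rfl⟩ | ⟨j, y, rfl⟩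
    · -- cycle vs cycle
      have hij : i ≠ j := fun h => hne (by rw [h])
      rw [pcol_cycle, pcol_cycle]
      exact mod3_ne hn h3 (cyc_cyc_rel hn hij hnear)
    · -- cycle vs pendant
      rw [pcol_cycle, pcol_pend]
      have : i.val % 3 < 3 := Nat.mod_lt _ (by omega)
      omega
    · -- pendant vs cycle
      rw [pcol_cycle, pcol_pend]
      have : j.val % 3 < 3 := Nat.mod_lt _ (by omega)
      omega
    · -- pendant vs pendant
      rcases pend_pend_rel hn hnear with rfl | h | h
      · -- same cycle vertex
        have hxy : x ≠ y := by
          intro h; exact hne (by rw [h])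
        rw [pcol_pend, pcol_pend]
        have hx := hlt i x
        have hy := hlt i y
        have : x.val ≠ y.val := fun h => hxy (Fin.ext h)
        by_cases hp : i.val % 2 = 0
        · rw [if_pos hp, if_pos hp]; omega
        · rw [if_neg hp, if_neg hp]; omega
      · subst h
        exact pend_colour_ne_succ hn h2 hmax
      · subst h
        exact (pend_colour_ne_succ hn h2 hmax).symm

end Aux3

open Sum in
/-- The five kinds of edges incident to the cycle edge `{a, a+1}`. -/
def lowerMap (n : ℕ) [NeZero n] (p : Fin n → ℕ) (a : Fin n) :
    (Unit ⊕ Unit ⊕ Unit ⊕ Fin (p a) ⊕ Fin (p (a + 1))) →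
      Sym2 (Fin n ⊕ Σ i : Fin n, Fin (p i)) :=
  Sum.elim (fun _ => s(inl (a - 1), inl a))
    (Sum.elim (fun _ => s(inl a, inl (a + 1)))
      (Sum.elim (fun _ => s(inl (a + 1), inl (a + 1 + 1)))
        (Sum.elim (fun x => s(inl a, Sum.inr ⟨a, x⟩))
          (fun y => s(inl (a + 1), Sum.inr ⟨a + 1, y⟩)))))

section Aux4
variable {n : ℕ} [NeZero n] {p : Fin n → ℕ}
open Sum

lemma lowerMap_inj (hn : 6 ≤ n) (a : Fin n) : Function.Injective (lowerMap n p a) := by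
  have hsub : a - 1 + 1 = a := sub_add_cancel a 1
  have hne1 : a + 1 ≠ a := fin_succ_ne hn a
  have hne1s : a ≠ a + 1 := hne1.symm
  have hne2 : a + 1 + 1 ≠ a := fin_succ_succ_ne hn a
  have hne2s : a ≠ a + 1 + 1 := hne2.symm
  have hne3 : a + 1 + 1 ≠ a + 1 := fun h' => hne1 (add_right_cancel h')
  have hne3s : a + 1 ≠ a + 1 + 1 := hne3.symm
  have hsub1 : a - 1 ≠ a := by
    intro h'; rw [sub_eq_iff_eq_add] at h'; exact hne1s h'
  have hsub1s : a ≠ a - 1 := hsub1.symm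
  have hsub2 : a - 1 ≠ a + 1 := by
    intro h'; rw [sub_eq_iff_eq_add] at h'; exact hne2s h'
  have hsub2s : a + 1 ≠ a - 1 := hsub2.symm
  have hsub3 : a - 1 ≠ a + 1 + 1 := by
    intro h'; rw [sub_eq_iff_eq_add] at h'; exact fin_succ3_ne hn a h'.symm
  have hsub3s : a + 1 + 1 ≠ a - 1 := hsub3.symm
  rintro (_ | _ | _ | x | x') (_ | _ | _ | y | y') hst <;>
    simp_all [lowerMap, Sym2.eq_iff]

lemma lowerMap_edge (hn : 6 ≤ n) (a : Fin n) (t) :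
    lowerMap n p a t ∈ (pufferGraph n p).edgeSet := by
  have hsub : a - 1 + 1 = a := sub_add_cancel a 1
  rcases t with _ | _ | _ | x | y <;>
    simp only [lowerMap, Sum.elim_inl, Sum.elim_inr, mem_edgeSet]
  · exact (puffer_adj_inl_inl).2 ((cycle_adj_iff hn).2 (Or.inl hsub.symm))
  · exact (puffer_adj_inl_inl).2 ((cycle_adj_iff hn).2 (Or.inl rfl))
  · exact (puffer_adj_inl_inl).2 ((cycle_adj_iff hn).2 (Or.inl rfl))
  · exact (puffer_adj_inl_inr).2 rfl
  · exact (puffer_adj_inl_inr).2 rfl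

lemma lowerMap_mem (hn : 6 ≤ n) (a : Fin n) (t) :
    (inl a : Fin n ⊕ Σ i : Fin n, Fin (p i)) ∈ lowerMap n p a t ∨
      (inl (a + 1) : Fin n ⊕ Σ i : Fin n, Fin (p i)) ∈ lowerMap n p a t := by
  rcases t with _ | _ | _ | x | y
  · exact Or.inl (by simp [lowerMap])
  · exact Or.inl (by simp [lowerMap])
  · exact Or.inr (by simp [lowerMap])
  · exact Or.inl (by simp [lowerMap])
  · exact Or.inr (by simp [lowerMap])

lemma pcol_lower (hn : 6 ≤ n) (a : Fin n) {j : ℕ}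
    {c : Sym2 (Fin n ⊕ Σ i : Fin n, Fin (p i)) → ℕ}
    (hc : IsStrongEdgeColoring (pufferGraph n p) j c) :
    p a + p (a + 1) + 3 ≤ j := by
  classical
  obtain ⟨hbound, hstrong⟩ := hc
  let F : (Unit ⊕ Unit ⊕ Unit ⊕ Fin (p a) ⊕ Fin (p (a + 1))) → Fin j :=
    fun t => ⟨c (lowerMap n p a t), hbound _ (lowerMap_edge hn a t)⟩
  have hFinj : Function.Injective F := by
    intro s t hst
    have hcc : c (lowerMap n p a s) = c (lowerMap n p a t) := congrArg Fin.val hst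
    by_cases hmeq : lowerMap n p a s = lowerMap n p a t
    · exact lowerMap_inj hn a hmeq
    · exact absurd hcc
        (hstrong _ (lowerMap_edge hn a s) _ (lowerMap_edge hn a t) hmeq
          (near_of_ab hn (cycle_adj_succ hn a) (lowerMap_mem hn a s) (lowerMap_mem hn a t)))
  have hcard := Fintype.card_le_of_injective F hFinj
  simp [Fintype.card_sum] at hcard
  omega

end Aux4

section Aux5
variable {n : ℕ} [NeZero n] {p : Fin n → ℕ}

lemma maxCycleDegSum_ge (hn : 6 ≤ n) (i : Fin n) :
    4 + (p i + p (i + 1)) ≤ maxCycleDegSum n p := by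
  classical
  have h := Finset.le_sup (s := (Finset.univ : Finset (Fin n × Fin n))) (b := (i, i + 1))
    (f := fun q : Fin n × Fin n => if (cycleGraph n).Adj q.1 q.2 then
      sdeg (pufferGraph n p) (Sum.inl q.1) + sdeg (pufferGraph n p) (Sum.inl q.2) else 0)
    (Finset.mem_univ _)
  dsimp only at h
  rw [if_pos (cycle_adj_succ hn i), sdeg_inl hn, sdeg_inl hn] at h
  have h' : 2 + p i + (2 + p (i + 1)) ≤ maxCycleDegSum n p := h
  omega

lemma maxCycleDegSum_attained (hn : 6 ≤ n) (hp : ∃ i, 1 ≤ p i) :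
    ∃ a : Fin n, maxCycleDegSum n p = 4 + (p a + p (a + 1)) := by
  classical
  obtain ⟨q, -, hq⟩ := Finset.exists_mem_eq_sup (Finset.univ : Finset (Fin n × Fin n))
    ⟨((0 : Fin n), (0 : Fin n)), Finset.mem_univ _⟩
    (fun q : Fin n × Fin n => if (cycleGraph n).Adj q.1 q.2 then
      sdeg (pufferGraph n p) (Sum.inl q.1) + sdeg (pufferGraph n p) (Sum.inl q.2) else 0)
  by_cases hadj : (cycleGraph n).Adj q.1 q.2
  · rw [if_pos hadj, sdeg_inl hn, sdeg_inl hn] at hq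
    have hq' : maxCycleDegSum n p = 2 + p q.1 + (2 + p q.2) := hq
    rcases (cycle_adj_iff hn).1 hadj with h | h
    · exact ⟨q.1, by rw [hq', ← h]; omega⟩
    · exact ⟨q.2, by rw [hq', ← h]; omega⟩
  · rw [if_neg hadj] at hq
    have hq' : maxCycleDegSum n p = 0 := hq
    obtain ⟨i0, hi0⟩ := hp
    have := maxCycleDegSum_ge (p := p) hn i0
    omega

end Aux5

/-- Let `G ≠ C_{2k}` be obtained from an even cycle `C_{2k}`, `2k ≥ 6`, `2k ≡ 0 (mod 3)`, by
attaching pendant edges at cycle vertices (at least one pendant edge in total). Then the strong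
chromatic index equals the maximum of `d(u) + d(v) - 1` over the edges `uv` of the cycle. -/
theorem sci_even_cycle_mod0 (k : ℕ) (hk : 3 ≤ k) (hmod : (2 * k) % 3 = 0)
    (p : Fin (2 * k) → ℕ) (hp : ∃ i, 1 ≤ p i) :
    sci (pufferGraph (2 * k) p) = maxCycleDegSum (2 * k) p - 1 := by
  haveI : NeZero (2 * k) := ⟨by omega⟩
  have hn : 6 ≤ 2 * k := by omega
  have h2 : 2 ∣ 2 * k := ⟨k, rfl⟩
  have h3 : 3 ∣ 2 * k := Nat.dvd_of_mod_eq_zero hmod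
  obtain ⟨a, hM⟩ := maxCycleDegSum_attained (p := p) hn hp
  set m := p a + p (a + 1) with hm_def
  have hmax : ∀ i : Fin (2 * k), p i + p (i + 1) ≤ m := by
    intro i
    have := maxCycleDegSum_ge (p := p) hn i
    omega
  have hm1 : 1 ≤ m := by
    obtain ⟨i0, hi0⟩ := hp
    have := hmax i0
    omega
  have hupper := pcol_strong (p := p) hn h2 h3 hm1 hmax
  have hmem : (m + 3) ∈ {j | ∃ c, IsStrongEdgeColoring (pufferGraph (2 * k) p) j c} :=
    ⟨pcol (2 * k) p m hn, hupper⟩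
  have hle : sci (pufferGraph (2 * k) p) ≤ m + 3 := Nat.sInf_le hmem
  have hge : m + 3 ≤ sci (pufferGraph (2 * k) p) := by
    apply le_csInf ⟨m + 3, hmem⟩
    rintro j ⟨c, hc⟩
    have := pcol_lower hn a hc
    omega
  omega
end
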